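/- Let k be a field of characteristic zero. Fix an integer κ ≥ 1, positive integers r_1,…,r_κ, and variables Y_{l,i} for l ∈ {1,…,κ}, i ∈ {1,…,r_l}. For a subset S ⊆ {1,…,κ}, let R_S ⊆ k[Y_{l,i}] be the subalgebra of polynomials in the variables {Y_{l,i} : l ∈ S, 1 ≤ i ≤ r_l} that are invariant under the full symmetric group on this whole set of Σ_{l∈S} r_l variables. Suppose S_1,…,S_κ ⊆ {1,…,κ} are subsets whose κ×κ indicator matrix (δ_i^j), with δ_i^j = 1 if i ∈ S_j and 0 otherwise, is invertible over ℚ. Then the k-subalgebra of k[Y_{l,i}] generated by R_{S_1} ∪ … ∪ R_{S_κ} equals the subalgebra of all polynomials invariant under the product group 𝔖_{r_1} × … × 𝔖_{r_κ}, where the factor 𝔖_{r_l} permutes the second indices of the variables Y_{l,1},…,Y_{l,r_l}. -/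

import Mathlib

open MvPolynomial

-- rename congruence on vars
theorem rename_congr_vars {R σ τ : Type*} [CommSemiring R] {f g : σ → τ}
    {p : MvPolynomial σ R} (h : ∀ v ∈ p.vars, f v = g v) :
    rename f p = rename g p := by
  apply MvPolynomial.hom_congr_vars (f₁ := (rename f).toRingHom) (f₂ := (rename g).toRingHom)
  · ext a; simp
  · intro i hi _; simp [h i hi]
  · rfl

-- Newton: esymm in adjoin of power sums, char zero field
theorem esymm_mem_adjoin_psum (k : Type*) [Field k] [CharZero k] (σ : Type*) [Fintype σ] :
    ∀ j : ℕ, esymm σ k j ∈ Algebra.adjoin k (Set.range (psum σ k)) := by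
  intro j
  induction j using Nat.strong_induction_on with
  | _ j ih =>
    rcases Nat.eq_zero_or_pos j with rfl | hj
    · rw [esymm_zero]; exact Subalgebra.one_mem _
    · have hN := mul_esymm_eq_sum σ k j
      have hcast : (j : MvPolynomial σ k) = C (j : k) := (C_eq_coe_nat j).symm
      have hj0 : (j : k) ≠ 0 := Nat.cast_ne_zero.2 hj.ne'
      have : esymm σ k j = C ((j : k)⁻¹) * ((j : MvPolynomial σ k) * esymm σ k j) := by
        rw [hcast, ← mul_assoc, ← C_mul, inv_mul_cancel₀ hj0, C_1, one_mul]
      rw [this, hN]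
      refine Subalgebra.mul_mem _ ?_ (Subalgebra.mul_mem _ ?_ ?_)
      · exact Subalgebra.algebraMap_mem _ _
      · exact Subalgebra.pow_mem _ (Subalgebra.neg_mem _ (Subalgebra.one_mem _)) _
      · refine Subalgebra.sum_mem _ fun a ha => ?_
        rw [Finset.mem_filter] at ha
        refine Subalgebra.mul_mem _ (Subalgebra.mul_mem _ ?_ (ih a.1 ha.2)) ?_
        · exact Subalgebra.pow_mem _ (Subalgebra.neg_mem _ (Subalgebra.one_mem _)) _
        · exact Algebra.subset_adjoin ⟨a.2, rfl⟩

-- symmetric polynomials are in adjoin of psums (char 0)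
theorem isSymmetric_mem_adjoin_psum (k : Type*) [Field k] [CharZero k] (σ : Type*) [Fintype σ]
    {p : MvPolynomial σ k} (hp : p.IsSymmetric) :
    p ∈ Algebra.adjoin k (Set.range (psum σ k)) := by
  obtain ⟨q, hq⟩ := esymmAlgHom_surjective (σ := σ) (n := Fintype.card σ) k le_rfl ⟨p, hp⟩
  have : p = aeval (fun i : Fin (Fintype.card σ) ↦ esymm σ k (i + 1)) q := by
    have := congrArg Subtype.val hq
    rw [esymmAlgHom_apply] at this
    exact this.symm
  rw [this]
  have h1 : aeval (fun i : Fin (Fintype.card σ) ↦ esymm σ k (i + 1)) q ∈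
      Algebra.adjoin k (Set.range fun i : Fin (Fintype.card σ) ↦ esymm σ k (i + 1)) := by
    rw [Algebra.adjoin_range_eq_range_aeval]; exact ⟨q, rfl⟩
  refine Algebra.adjoin_le ?_ h1
  rintro x ⟨i, rfl⟩
  exact esymm_mem_adjoin_psum k σ (i + 1)

def blockEquiv {n : ℕ} (r : Fin (n + 1) → ℕ) :
    (Σ i : Fin (n + 1), Fin (r i)) ≃ (Fin (r 0) ⊕ Σ i : Fin n, Fin (r i.succ)) where
  toFun v := Fin.cases (motive := fun i => Fin (r i) →
      (Fin (r 0) ⊕ Σ i : Fin n, Fin (r i.succ)))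
    (fun x => Sum.inl x) (fun j x => Sum.inr ⟨j, x⟩) v.1 v.2
  invFun w := Sum.elim (fun x => ⟨0, x⟩) (fun y => ⟨y.1.succ, y.2⟩) w
  left_inv := by
    rintro ⟨i, x⟩
    induction i using Fin.cases with
    | zero => simp
    | succ j => simp
  right_inv := by rintro (x | ⟨j, y⟩) <;> simp

@[simp] lemma blockEquiv_zero {n : ℕ} (r : Fin (n + 1) → ℕ) (x : Fin (r 0)) :
    blockEquiv r ⟨0, x⟩ = Sum.inl x := by simp [blockEquiv]

@[simp] lemma blockEquiv_succ {n : ℕ} (r : Fin (n + 1) → ℕ) (j : Fin n) (x : Fin (r j.succ)) :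
    blockEquiv r ⟨j.succ, x⟩ = Sum.inr ⟨j, x⟩ := by simp [blockEquiv]

@[simp] lemma blockEquiv_symm_inl {n : ℕ} (r : Fin (n + 1) → ℕ) (x : Fin (r 0)) :
    (blockEquiv r).symm (Sum.inl x) = ⟨0, x⟩ := rfl

@[simp] lemma blockEquiv_symm_inr {n : ℕ} (r : Fin (n + 1) → ℕ)
    (y : Σ i : Fin n, Fin (r i.succ)) :
    (blockEquiv r).symm (Sum.inr y) = ⟨y.1.succ, y.2⟩ := rfl

theorem key_generation (k : Type*) [CommRing k] :
    ∀ (n : ℕ) (r : Fin n → ℕ) (p : MvPolynomial (Σ i : Fin n, Fin (r i)) k),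
      (∀ σ : Equiv.Perm (Σ i : Fin n, Fin (r i)), (∀ v, (σ v).1 = v.1) →
        rename σ p = p) →
      p ∈ Algebra.adjoin k {q | ∃ (l : Fin n) (s : MvPolynomial (Fin (r l)) k),
        s.IsSymmetric ∧ q = rename (Sigma.mk l) s} := by
  intro n
  induction n with
  | zero =>
    intro r p _
    have : IsEmpty (Σ i : Fin 0, Fin (r i)) := ⟨fun v => v.1.elim0⟩
    obtain ⟨a, rfl⟩ := C_surjective (Σ i : Fin 0, Fin (r i)) p
    rw [← MvPolynomial.algebraMap_eq]
    exact Subalgebra.algebraMap_mem _ a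
  | succ n IH =>
    intro r p hp
    set G : Set (MvPolynomial (Σ i : Fin (n+1), Fin (r i)) k) :=
      {q | ∃ (l : Fin (n+1)) (s : MvPolynomial (Fin (r l)) k),
        s.IsSymmetric ∧ q = rename (Sigma.mk l) s} with hG
    let r' : Fin n → ℕ := fun i => r i.succ
    let W := Σ i : Fin n, Fin (r' i)
    let R' := MvPolynomial W k
    let E := blockEquiv r
    let Φ : MvPolynomial (Σ i : Fin (n+1), Fin (r i)) k ≃ₐ[k]
        MvPolynomial (Fin (r 0)) R' :=
      (renameEquiv k E).trans (sumAlgEquiv k (Fin (r 0)) W)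
    -- Computation of Φ and Φ.symm on generators
    have hΦ0 : ∀ x : Fin (r 0), Φ (X ⟨0, x⟩) = X x := by
      intro x
      show sumAlgEquiv k (Fin (r 0)) W (rename E (X ⟨0, x⟩)) = X x
      rw [rename_X]
      show sumAlgEquiv k (Fin (r 0)) W (X (E ⟨0, x⟩)) = X x
      rw [show E ⟨0, x⟩ = Sum.inl x from blockEquiv_zero r x, sumAlgEquiv_X_inl]
    have hΦsucc : ∀ (j : Fin n) (x : Fin (r j.succ)),
        Φ (X ⟨j.succ, x⟩) = C (X (⟨j, x⟩ : W)) := by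
      intro j x
      show sumAlgEquiv k (Fin (r 0)) W (rename E (X ⟨j.succ, x⟩)) = _
      rw [rename_X]
      show sumAlgEquiv k (Fin (r 0)) W (X (E ⟨j.succ, x⟩)) = _
      rw [show E ⟨j.succ, x⟩ = Sum.inr ⟨j, x⟩ from blockEquiv_succ r j x, sumAlgEquiv_X_inr]
    have hΦs0 : ∀ x : Fin (r 0), Φ.symm (X x) = X ⟨0, x⟩ := by
      intro x
      rw [AlgEquiv.symm_apply_eq, hΦ0]
    have hΦssucc : ∀ (j : Fin n) (x : Fin (r j.succ)),
        Φ.symm (C (X (⟨j, x⟩ : W))) = X ⟨j.succ, x⟩ := by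
      intro j x
      rw [AlgEquiv.symm_apply_eq, hΦsucc]
    -- Φ p is symmetric
    have hsym : (Φ p).IsSymmetric := by
      intro e
      let σe : Equiv.Perm (Σ i : Fin (n+1), Fin (r i)) :=
        E.trans ((Equiv.sumCongr e (Equiv.refl W)).trans E.symm)
      have hσe0 : ∀ x : Fin (r 0), σe ⟨0, x⟩ = ⟨0, e x⟩ := fun x => by
        simp only [σe, E, Equiv.trans_apply, blockEquiv_zero, Equiv.sumCongr_apply,
          Sum.map_inl, blockEquiv_symm_inl]
        rfl
      have hσes : ∀ (j : Fin n) (x : Fin (r j.succ)), σe ⟨j.succ, x⟩ = ⟨j.succ, x⟩ :=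
        fun j x => by
        simp only [σe, E, Equiv.trans_apply, blockEquiv_succ, Equiv.sumCongr_apply,
          Sum.map_inr, blockEquiv_symm_inr, Equiv.refl_apply]
        rfl
      have hfib : ∀ v, (σe v).1 = v.1 := by
        rintro ⟨i, x⟩
        induction i using Fin.cases with
        | zero => rw [hσe0]
        | succ j => rw [hσes]
      have hcomp :
          (((rename (⇑e) : MvPolynomial (Fin (r 0)) R' →ₐ[R'] _).restrictScalars k).comp
            Φ.toAlgHom) = Φ.toAlgHom.comp (rename (⇑σe)) := by
        apply MvPolynomial.algHom_ext
        rintro ⟨i, x⟩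
        induction i using Fin.cases with
        | zero =>
          simp only [AlgHom.comp_apply, AlgHom.restrictScalars_apply,
            AlgEquiv.toAlgHom_eq_coe, AlgHom.coe_coe, AlgEquiv.coe_toAlgHom, rename_X]
          rw [hΦ0, rename_X, hσe0, hΦ0]
        | succ j =>
          simp only [AlgHom.comp_apply, AlgHom.restrictScalars_apply,
            AlgEquiv.toAlgHom_eq_coe, AlgHom.coe_coe, AlgEquiv.coe_toAlgHom, rename_X]
          rw [hΦsucc, rename_C, hσes, hΦsucc]
      have h := DFunLike.congr_fun hcomp p
      simp only [AlgHom.comp_apply, AlgHom.restrictScalars_apply,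
        AlgEquiv.toAlgHom_eq_coe, AlgHom.coe_coe] at h
      rw [hp σe hfib] at h
      exact h
    -- fundamental theorem over the coefficient ring R'
    set g : Fin (r 0) → MvPolynomial (Fin (r 0)) R' :=
      (fun i => esymm (Fin (r 0)) R' (i + 1)) with hgdef
    obtain ⟨q, hq⟩ := esymmAlgHom_surjective (σ := Fin (r 0)) (n := r 0) R'
      (Fintype.card_fin _).le ⟨Φ p, hsym⟩
    have hq' : Φ p = aeval g q := by
      have h := congrArg Subtype.val hq
      rw [esymmAlgHom_apply] at h
      exact h.symm
    -- coefficients of q are invariant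
    have hcoeff : ∀ (w : Equiv.Perm W), (∀ v : W, (w v).1 = v.1) →
        ∀ d, rename (⇑w) (q.coeff d) = q.coeff d := by
      intro w hw
      let σw : Equiv.Perm (Σ i : Fin (n+1), Fin (r i)) :=
        E.trans ((Equiv.sumCongr (Equiv.refl (Fin (r 0))) w).trans E.symm)
      have hσw0 : ∀ x : Fin (r 0), σw ⟨0, x⟩ = ⟨0, x⟩ := fun x => by
        simp only [σw, E, Equiv.trans_apply, blockEquiv_zero, Equiv.sumCongr_apply,
          Sum.map_inl, Equiv.refl_apply]
        rfl
      have hσws : ∀ (j : Fin n) (x : Fin (r j.succ)),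
          σw ⟨j.succ, x⟩ = ⟨(w ⟨j, x⟩).1.succ, (w ⟨j, x⟩).2⟩ := fun j x => by
        simp only [σw, E, Equiv.trans_apply, blockEquiv_succ, Equiv.sumCongr_apply,
          Sum.map_inr]
        rfl
      have hfib : ∀ v, (σw v).1 = v.1 := by
        rintro ⟨i, x⟩
        induction i using Fin.cases with
        | zero => rw [hσw0]
        | succ j =>
          rw [hσws]
          exact congrArg Fin.succ (hw ⟨j, x⟩)
      have hcomp2 :
          ((mapAlgHom (rename (⇑w) : MvPolynomial W k →ₐ[k] MvPolynomial W k)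
              : MvPolynomial (Fin (r 0)) R' →ₐ[k] MvPolynomial (Fin (r 0)) R').comp
            Φ.toAlgHom) = Φ.toAlgHom.comp (rename (⇑σw)) := by
        apply MvPolynomial.algHom_ext
        rintro ⟨i, x⟩
        induction i using Fin.cases with
        | zero =>
          simp only [AlgHom.comp_apply, AlgEquiv.toAlgHom_eq_coe, AlgHom.coe_coe,
            AlgEquiv.coe_toAlgHom, rename_X]
          rw [hΦ0, hσw0, hΦ0]
          simp
        | succ j =>
          simp only [AlgHom.comp_apply, AlgEquiv.toAlgHom_eq_coe, AlgHom.coe_coe,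
            AlgEquiv.coe_toAlgHom, rename_X]
          rw [hΦsucc, hσws, hΦsucc (w ⟨j, x⟩).1 (w ⟨j, x⟩).2]
          simp only [mapAlgHom_apply, map_C]
          exact congrArg C (rename_X _ _)
      have h2 := DFunLike.congr_fun hcomp2 p
      simp only [AlgHom.comp_apply, AlgEquiv.toAlgHom_eq_coe, AlgHom.coe_coe] at h2
      rw [hp σw hfib] at h2
      have h2' : map (↑(rename (⇑w) : MvPolynomial W k →ₐ[k] MvPolynomial W k) : R' →+* R')
          (Φ p) = Φ p := h2
      have hcomm : ∀ q₀ : MvPolynomial (Fin (r 0)) R',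
          map (↑(rename (⇑w) : MvPolynomial W k →ₐ[k] MvPolynomial W k) : R' →+* R')
            (aeval g q₀)
          = aeval g (map
              (↑(rename (⇑w) : MvPolynomial W k →ₐ[k] MvPolynomial W k) : R' →+* R') q₀) := by
        intro q₀
        induction q₀ using MvPolynomial.induction_on with
        | C a => simp [hgdef, aeval_C, algebraMap_eq]
        | add p₁ p₂ h₁ h₂ => simp only [map_add, h₁, h₂]
        | mul_X p₁ i h₁ => simp only [map_mul, aeval_X, map_X, h₁]; simp only [hgdef, map_esymm]
      have hqq : map (↑(rename (⇑w) : MvPolynomial W k →ₐ[k] MvPolynomial W k) : R' →+* R') q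
          = q := by
        apply esymmAlgHom_injective (σ := Fin (r 0)) (n := r 0) R' (Fintype.card_fin _).ge
        apply Subtype.ext
        rw [esymmAlgHom_apply, esymmAlgHom_apply]
        show aeval g _ = aeval g q
        rw [← hcomm, ← hq', h2', hq']
      intro d
      have h3 := congrArg (fun z => MvPolynomial.coeff d z) hqq
      simpa [MvPolynomial.coeff_map] using h3
    -- apply the induction hypothesis to the coefficients
    have hcmem : ∀ d, q.coeff d ∈ Algebra.adjoin k
        {x : R' | ∃ (l : Fin n) (s : MvPolynomial (Fin (r' l)) k),
          s.IsSymmetric ∧ x = rename (Sigma.mk l) s} :=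
      fun d => IH r' (q.coeff d) (fun w hw => hcoeff w hw d)
    -- reassemble p
    have hrepr : p = ∑ d ∈ q.support,
        Φ.symm (C (q.coeff d)) *
          d.prod (fun i m => (Φ.symm (esymm (Fin (r 0)) R' (i + 1))) ^ m) := by
      have h0 : p = Φ.symm (aeval g q) := by
        rw [← hq']
        exact (Φ.symm_apply_apply p).symm
      rw [h0]
      conv_lhs => rw [q.as_sum]
      rw [map_sum, map_sum]
      refine Finset.sum_congr rfl fun d _ => ?_
      rw [aeval_monomial, map_mul, map_finsuppProd]
      refine congrArg₂ (· * ·) rfl ?_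
      refine Finsupp.prod_congr fun i _ => ?_
      exact map_pow _ _ _
    rw [hrepr]
    refine Subalgebra.sum_mem _ fun d hd => Subalgebra.mul_mem _ ?_ ?_
    · -- the coefficient part
      let J : R' →ₐ[k] MvPolynomial (Σ i : Fin (n+1), Fin (r i)) k :=
        (Φ.symm.toAlgHom).comp (IsScalarTower.toAlgHom k R' (MvPolynomial (Fin (r 0)) R'))
      have hJval : ∀ c : R', J c = Φ.symm (C c) := fun c => by
        simp only [J, AlgHom.comp_apply, IsScalarTower.coe_toAlgHom', AlgEquiv.toAlgHom_eq_coe,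
          AlgHom.coe_coe, AlgEquiv.coe_toAlgHom, algebraMap_eq]
      rw [← hJval]
      have hmem' : J (q.coeff d) ∈ Subalgebra.map J (Algebra.adjoin k
          {x : R' | ∃ (l : Fin n) (s : MvPolynomial (Fin (r' l)) k),
            s.IsSymmetric ∧ x = rename (Sigma.mk l) s}) := ⟨_, hcmem d, rfl⟩
      rw [AlgHom.map_adjoin] at hmem'
      refine Algebra.adjoin_mono ?_ hmem'
      rintro x ⟨y, ⟨l, s, hs, rfl⟩, rfl⟩
      refine ⟨l.succ, s, hs, ?_⟩
      have hJr : (J.comp (rename (fun x : Fin (r' l) => (⟨l, x⟩ : W)) :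
              MvPolynomial (Fin (r' l)) k →ₐ[k] R'))
           = (rename (fun x : Fin (r' l) => (⟨l.succ, x⟩ : Σ i : Fin (n+1), Fin (r i))) :
              MvPolynomial (Fin (r' l)) k →ₐ[k] _) := by
        apply MvPolynomial.algHom_ext
        intro x
        simp only [AlgHom.comp_apply]
        rw [rename_X, hJval, rename_X, hΦssucc]
      have h5 := DFunLike.congr_fun hJr s
      simp only [AlgHom.comp_apply] at h5
      exact h5
    · -- the esymm part
      rw [Finsupp.prod]
      refine Subalgebra.prod_mem _ fun i _ => Subalgebra.pow_mem _ ?_ _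
      refine Algebra.subset_adjoin ⟨0, esymm (Fin (r 0)) k (i + 1),
        esymm_isSymmetric _ _ _, ?_⟩
      have hmapE : esymm (Fin (r 0)) R' (i + 1)
          = map (algebraMap k R') (esymm (Fin (r 0)) k (i + 1)) := (map_esymm (Fin (r 0)) k (i + 1) (algebraMap k R')).symm
      rw [hmapE]
      have hAH : (Φ.symm.toAlgHom.comp ((mapAlgHom (Algebra.ofId k R'))
            : MvPolynomial (Fin (r 0)) k →ₐ[k] MvPolynomial (Fin (r 0)) R'))
          = (rename (fun x : Fin (r 0) => (⟨0, x⟩ : Σ i : Fin (n+1), Fin (r i))) :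
              MvPolynomial (Fin (r 0)) k →ₐ[k] MvPolynomial (Σ i : Fin (n+1), Fin (r i)) k) := by
        apply MvPolynomial.algHom_ext
        intro x
        simp only [AlgHom.comp_apply, rename_X, AlgEquiv.toAlgHom_eq_coe, AlgHom.coe_coe,
          AlgEquiv.coe_toAlgHom]
        have : (mapAlgHom (Algebra.ofId k R') : MvPolynomial (Fin (r 0)) k →ₐ[k]
            MvPolynomial (Fin (r 0)) R') (X x) = X x := by simp
        rw [this, hΦs0]
      have := DFunLike.congr_fun hAH (esymm (Fin (r 0)) k (i + 1))
      simp only [AlgHom.comp_apply, AlgEquiv.toAlgHom_eq_coe, AlgHom.coe_coe,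
        AlgEquiv.coe_toAlgHom] at this
      rw [← this]
      rfl


/-- if the indicator matrix of the subsets `S 1, …, S κ` is invertible
over `ℚ`, then the subalgebra generated by the partial symmetric algebras `R_{S_j}` is the
whole algebra of `𝔖_{r_1} × ⋯ × 𝔖_{r_κ}`-invariants. -/
theorem adjoin_partial_symmetric_eq_invariants (k : Type*) [Field k] [CharZero k]
    (κ : ℕ) (hκ : 1 ≤ κ) (r : Fin κ → ℕ) (hr : ∀ l, 0 < r l)
    (S : Fin κ → Finset (Fin κ))
    (hS : IsUnit (Matrix.of fun i j : Fin κ => if i ∈ S j then (1 : ℚ) else 0)) :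
    (Algebra.adjoin k (⋃ j : Fin κ,
        {p : MvPolynomial (Σ l : Fin κ, Fin (r l)) k |
          (∀ v ∈ p.vars, v.1 ∈ S j) ∧
          ∀ σ : Equiv.Perm (Σ l : Fin κ, Fin (r l)),
            (∀ v : Σ l : Fin κ, Fin (r l), v.1 ∉ S j → σ v = v) →
            MvPolynomial.rename σ p = p}) : Set (MvPolynomial (Σ l : Fin κ, Fin (r l)) k))
      = {p : MvPolynomial (Σ l : Fin κ, Fin (r l)) k |
          ∀ σ : Equiv.Perm (Σ l : Fin κ, Fin (r l)),
            (∀ v : Σ l : Fin κ, Fin (r l), (σ v).1 = v.1) →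
            MvPolynomial.rename σ p = p} := by
  classical
  set Gen : Set (MvPolynomial (Σ l : Fin κ, Fin (r l)) k) := ⋃ j : Fin κ,
      {p : MvPolynomial (Σ l : Fin κ, Fin (r l)) k |
        (∀ v ∈ p.vars, v.1 ∈ S j) ∧
        ∀ σ : Equiv.Perm (Σ l : Fin κ, Fin (r l)),
          (∀ v : Σ l : Fin κ, Fin (r l), v.1 ∉ S j → σ v = v) →
          MvPolynomial.rename σ p = p} with hGen
  apply Set.Subset.antisymm
  · -- easy direction: the adjoin consists of invariants
    intro x hx
    rw [SetLike.mem_coe] at hx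
    simp only [Set.mem_setOf_eq]
    intro σ hσ
    induction hx using Algebra.adjoin_induction with
    | mem x hxg =>
      obtain ⟨j, hj⟩ := Set.mem_iUnion.mp hxg
      obtain ⟨hvars, hinv⟩ := hj
      set f : (Σ l : Fin κ, Fin (r l)) → (Σ l : Fin κ, Fin (r l)) :=
        fun v => if v.1 ∈ S j then σ v else v with hf
      have hfib : ∀ v, (f v).1 = v.1 := by
        intro v
        by_cases h : v.1 ∈ S j
        · simp only [hf, if_pos h]; exact hσ v
        · simp only [hf, if_neg h]
      have hinjf : Function.Injective f := by
        intro a b hab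
        by_cases ha : a.1 ∈ S j <;> by_cases hb : b.1 ∈ S j
        · simp only [hf, if_pos ha, if_pos hb] at hab; exact σ.injective hab
        · simp only [hf, if_pos ha, if_neg hb] at hab
          exfalso; apply hb; rw [← hab, hσ a]; exact ha
        · simp only [hf, if_neg ha, if_pos hb] at hab
          exfalso; apply ha; rw [hab, hσ b]; exact hb
        · simpa only [hf, if_neg ha, if_neg hb] using hab
      have hbij : Function.Bijective f := Finite.injective_iff_bijective.mp hinjf
      have h1 : rename (⇑σ) x = rename f x :=
        rename_congr_vars (fun v hv => by simp only [hf, if_pos (hvars v hv)])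
      have h2 : rename f x = x :=
        hinv (Equiv.ofBijective f hbij) (fun v hv => by
          show f v = v
          simp only [hf, if_neg hv])
      rw [h1, h2]
    | algebraMap a => rw [MvPolynomial.algebraMap_eq, rename_C]
    | add a b ha hb iha ihb => rw [map_add, iha, ihb]
    | mul a b ha hb iha ihb => rw [map_mul, iha, ihb]
  · -- hard direction
    intro p hp
    simp only [Set.mem_setOf_eq] at hp
    rw [SetLike.mem_coe]
    -- the per-block power sums
    set P : (l : Fin κ) → ℕ → MvPolynomial (Σ l : Fin κ, Fin (r l)) k :=
      fun l m => rename (fun x : Fin (r l) => (⟨l, x⟩ : Σ l : Fin κ, Fin (r l)))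
        (psum (Fin (r l)) k m) with hP
    have hPsum : ∀ (l : Fin κ) (m : ℕ),
        P l m = ∑ i : Fin (r l), X (⟨l, i⟩ : Σ l : Fin κ, Fin (r l)) ^ m := by
      intro l m
      rw [hP]
      simp only [psum, map_sum, map_pow, rename_X]
    -- the sums of power sums are in the generating set
    have hQmem : ∀ (j : Fin κ) (m : ℕ), 0 < m → (∑ l ∈ S j, P l m) ∈ Gen := by
      intro j m hm
      have hQ : (∑ l ∈ S j, P l m)
          = ∑ v ∈ (S j).sigma (fun l => (Finset.univ : Finset (Fin (r l)))),
              X v ^ m := by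
        rw [Finset.sum_sigma]
        exact Finset.sum_congr rfl fun l hl => hPsum l m
      refine Set.mem_iUnion.mpr ⟨j, ?_, ?_⟩
      · -- variables
        intro v hv
        rw [hQ] at hv
        have h6 := vars_sum_subset _ (fun v : (Σ l : Fin κ, Fin (r l)) => X v ^ m) hv
        obtain ⟨w, hw1, hw2⟩ := Finset.mem_biUnion.mp h6
        have h7 : (X (R := k) w ^ m).vars ⊆ {w} := by
          refine (vars_pow _ _).trans ?_
          rw [vars_X]
        have := h7 hw2
        rw [Finset.mem_singleton] at this
        subst this
        exact (Finset.mem_sigma.mp hw1).1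
      · -- invariance
        intro σ hfix
        rw [hQ, map_sum]
        simp only [map_pow, rename_X]
        refine Finset.sum_equiv σ ?_ ?_
        · intro v
          simp only [Finset.mem_sigma, Finset.mem_univ, and_true]
          constructor
          · intro hv
            by_contra hcon
            have h8 := hfix (σ v) hcon
            have h9 := σ.injective h8
            rw [h9] at hcon
            exact hcon hv
          · intro hv
            by_contra hcon
            rw [hfix v hcon] at hv
            exact hcon hv
        · intro v _
          rfl
    -- the matrix argument
    obtain ⟨u, hu⟩ := hS
    set N : Matrix (Fin κ) (Fin κ) ℚ := ↑u⁻¹ with hNdef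
    have h1 : (Matrix.of fun i j : Fin κ => if i ∈ S j then (1 : ℚ) else 0) * N = 1 := by
      rw [← hu]; exact u.mul_inv
    have hMN : ∀ i l : Fin κ,
        (∑ j : Fin κ, (if i ∈ S j then (1:ℚ) else 0) * N j l) = if i = l then 1 else 0 := by
      intro i l
      rw [show (fun j => (if i ∈ S j then (1:ℚ) else 0) * N j l)
          = fun j => (Matrix.of fun i j : Fin κ => if i ∈ S j then (1 : ℚ) else 0) i j * N j l
          from rfl, ← Matrix.mul_apply, h1, Matrix.one_apply]
    have hcomb : ∀ (l : Fin κ) (m : ℕ),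
        ∑ j : Fin κ, ((N j l : k)) • (∑ i ∈ S j, P i m) = P l m := by
      intro l m
      have key : ∀ j : Fin κ, ((N j l : k)) • (∑ i ∈ S j, P i m)
          = ∑ i : Fin κ, (((if i ∈ S j then (1:ℚ) else 0) * N j l : ℚ) : k) • P i m := by
        intro j
        rw [Finset.smul_sum]
        rw [show (∑ i ∈ S j, (N j l : k) • P i m)
            = ∑ i ∈ Finset.univ ∩ S j, (N j l : k) • P i m by rw [Finset.univ_inter]]
        rw [← Finset.sum_ite_mem]
        refine Finset.sum_congr rfl fun i _ => ?_
        by_cases h : i ∈ S j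
        · rw [if_pos h, if_pos h, one_mul]
        · rw [if_neg h, if_neg h, zero_mul, Rat.cast_zero, zero_smul]
      simp only [key]
      rw [Finset.sum_comm]
      have key2 : ∀ i : Fin κ,
          (∑ j : Fin κ, (((if i ∈ S j then (1:ℚ) else 0) * N j l : ℚ) : k) • P i m)
          = ((if i = l then (1:ℚ) else 0 : ℚ) : k) • P i m := by
        intro i
        rw [← Finset.sum_smul, ← Rat.cast_sum, hMN i l]
      simp only [key2]
      simp only [apply_ite (fun q : ℚ => (q : k)), Rat.cast_one, Rat.cast_zero, ite_smul,
        one_smul, zero_smul]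
      simp
    have hPmem : ∀ (l : Fin κ) (m : ℕ), P l m ∈ Algebra.adjoin k Gen := by
      intro l m
      rcases Nat.eq_zero_or_pos m with rfl | hm
      · have : P l 0 = ((r l : ℕ) : MvPolynomial (Σ l : Fin κ, Fin (r l)) k) := by
          rw [hP]
          simp only [psum_zero, Fintype.card_fin, map_natCast]
        rw [this]
        exact Subalgebra.natCast_mem _ _
      · rw [← hcomb l m]
        refine Subalgebra.sum_mem _ fun j _ => Subalgebra.smul_mem _ ?_ _
        exact Algebra.subset_adjoin (hQmem j m hm)
    -- conclude via the key generation lemma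
    have hkey := key_generation k κ r p hp
    have hle : Algebra.adjoin k {q : MvPolynomial (Σ l : Fin κ, Fin (r l)) k |
        ∃ (l : Fin κ) (s : MvPolynomial (Fin (r l)) k),
          s.IsSymmetric ∧ q = rename (Sigma.mk l) s} ≤ Algebra.adjoin k Gen := by
      refine Algebra.adjoin_le ?_
      rintro x ⟨l, s, hs, rfl⟩
      rw [SetLike.mem_coe]
      have hsmem : s ∈ Algebra.adjoin k (Set.range (psum (Fin (r l)) k)) :=
        isSymmetric_mem_adjoin_psum k _ hs
      have hmap : rename (fun x : Fin (r l) => (⟨l, x⟩ : Σ l : Fin κ, Fin (r l))) s ∈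
          Subalgebra.map
          (rename (fun x : Fin (r l) => (⟨l, x⟩ : Σ l : Fin κ, Fin (r l))) :
            MvPolynomial (Fin (r l)) k →ₐ[k] MvPolynomial (Σ l : Fin κ, Fin (r l)) k)
          (Algebra.adjoin k (Set.range (psum (Fin (r l)) k))) := ⟨s, hsmem, rfl⟩
      rw [AlgHom.map_adjoin] at hmap
      have hle2 : Algebra.adjoin k
          ((rename (fun x : Fin (r l) => (⟨l, x⟩ : Σ l : Fin κ, Fin (r l))) :
            MvPolynomial (Fin (r l)) k →ₐ[k] MvPolynomial (Σ l : Fin κ, Fin (r l)) k) ''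
            (Set.range (psum (Fin (r l)) k))) ≤ Algebra.adjoin k Gen := by
        refine Algebra.adjoin_le ?_
        rintro y ⟨z, ⟨m, rfl⟩, rfl⟩
        rw [SetLike.mem_coe]
        exact hPmem l m
      exact hle2 hmap
    exact hle hkey
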